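/- Let X be an extensible marked Dynkin diagram (Δ ≠ 0, det(C(X)) ≠ 0, and gcd(Δ, det(C(X))) = 1) and n ≥ d with det(C(X_n)) ≠ 0. Then the weight lattice modulo root lattice P(X_n)/Q(X_n) is a cyclic group of order |det(C(X_n))| generated by the class of the fundamental weight ω_n^{(n)} corresponding to the last node of the tail. -/

import Mathlib

open scoped BigOperators

def Xmat (d : ℕ) (C : Matrix (Fin d) (Fin d) ℤ) (n : ℕ) : Matrix (Fin n) (Fin n) ℤ :=
  Matrix.of fun i j =>
    if h : (i : ℕ) < d ∧ (j : ℕ) < d then C ⟨i, h.1⟩ ⟨j, h.2⟩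
    else if (i : ℕ) = (j : ℕ) then 2
    else if (i : ℕ) + 1 = (j : ℕ) ∨ (j : ℕ) + 1 = (i : ℕ) then -1
    else 0

def detX (d : ℕ) (C : Matrix (Fin d) (Fin d) ℤ) (n : ℕ) : ℤ := (Xmat d C n).det

def Δdiff (d : ℕ) (C : Matrix (Fin d) (Fin d) ℤ) : ℤ := detX d C d - detX d C (d - 1)

def Extensible (d : ℕ) (C : Matrix (Fin d) (Fin d) ℤ) : Prop :=
  Δdiff d C ≠ 0 ∧ detX d C d ≠ 0 ∧ IsCoprime (Δdiff d C) (detX d C d)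

def fw (n : ℕ) (i : Fin n) : Fin n → ℤ := Pi.single i 1

def col (d : ℕ) (C : Matrix (Fin d) (Fin d) ℤ) (n : ℕ) (j : Fin n) : Fin n → ℤ :=
  fun i => Xmat d C n i j

def Qlat (d : ℕ) (C : Matrix (Fin d) (Fin d) ℤ) (n : ℕ) : Submodule ℤ (Fin n → ℤ) :=
  Submodule.span ℤ (Set.range (col d C n))

def lastFin (n : ℕ) (h : 0 < n) : Fin n := ⟨n - 1, by omega⟩

def ASeq (d : ℕ) (C : Matrix (Fin d) (Fin d) ℤ) (a : ℕ → ℤ) : Prop :=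
  ∀ n, d ≤ n → detX d C n ≠ 0 → ∀ i : Fin n,
    (-(Δdiff d C)) • fw n i - a (i : ℕ) • fw n (lastFin n i.pos) ∈ Qlat d C n

def XF (d : ℕ) (C : Matrix (Fin d) (Fin d) ℤ) (a b : ℕ) : ℤ :=
  if h : a < d ∧ b < d then C ⟨a, h.1⟩ ⟨b, h.2⟩
  else if a = b then 2
  else if a + 1 = b ∨ b + 1 = a then -1
  else 0

lemma Xmat_eq_XF (d : ℕ) (C : Matrix (Fin d) (Fin d) ℤ) (m : ℕ) (i j : Fin m) :
    Xmat d C m i j = XF d C i j := rfl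

lemma Xmat_coe (d : ℕ) (C : Matrix (Fin d) (Fin d) ℤ) {m m' : ℕ} (i j : Fin m) (i' j' : Fin m')
    (hi : (i : ℕ) = (i' : ℕ)) (hj : (j : ℕ) = (j' : ℕ)) :
    Xmat d C m i j = Xmat d C m' i' j' := by
  rw [Xmat_eq_XF, Xmat_eq_XF, hi, hj]

lemma submatrix_Xmat (d : ℕ) (C : Matrix (Fin d) (Fin d) ℤ) (m : ℕ) :
    (Xmat d C (m + 1)).submatrix Fin.castSucc Fin.castSucc = Xmat d C m := by
  ext i j
  exact Xmat_coe d C _ _ i j (by simp) (by simp)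

lemma detX_rec (d : ℕ) (C : Matrix (Fin d) (Fin d) ℤ) (m : ℕ) (hm : d ≤ m + 1) :
    detX d C (m + 2) = 2 * detX d C (m + 1) - detX d C m := by
  classical
  set A := Xmat d C (m + 2) with hA
  set a : Fin (m + 2) := Fin.castSucc (Fin.last m) with haa
  set b : Fin (m + 2) := Fin.last (m + 1) with hbb
  have hva : (a : ℕ) = m := rfl
  have hvb : (b : ℕ) = m + 1 := rfl
  have hrow : ∀ j : Fin (m + 2), A b j =
      if (j : ℕ) = m + 1 then 2 else if (j : ℕ) = m then -1 else 0 := by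
    intro j
    have hj := j.isLt
    rw [hA, Xmat_eq_XF]
    unfold XF
    rw [hvb]
    rw [dif_neg (by omega)]
    split_ifs <;> omega
  have hab : a ≠ b := by
    intro h
    have := congrArg (Fin.val) h
    rw [hva, hvb] at this
    omega
  set f : Fin (m + 2) → ℤ := fun j =>
    (-1) ^ ((b : ℕ) + (j : ℕ)) * A b j * (A.submatrix b.succAbove j.succAbove).det with hf
  have expand : A.det = ∑ j, f j := Matrix.det_succ_row A b
  have hz : ∀ x ∈ Finset.univ, x ∉ ({a, b} : Finset (Fin (m + 2))) → f x = 0 := by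
    intro x _ hx
    simp only [Finset.mem_insert, Finset.mem_singleton] at hx
    push_neg at hx
    have h1 : (x : ℕ) ≠ m := fun h => hx.1 (by rw [Fin.ext_iff, hva, h])
    have h2 : (x : ℕ) ≠ m + 1 := fun h => hx.2 (by rw [Fin.ext_iff, hvb, h])
    rw [hf]
    simp only
    rw [hrow, if_neg h2, if_neg h1]
    ring
  have hsum : A.det = f a + f b := by
    rw [expand, ← Finset.sum_subset (Finset.subset_univ _) hz, Finset.sum_pair hab]
  have hfb : f b = 2 * detX d C (m + 1) := by
    rw [hf]
    simp only
    rw [hrow, hvb, if_pos rfl, hbb, Fin.succAbove_last]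
    rw [Even.neg_one_pow ⟨m + 1, rfl⟩]
    have : (Xmat d C (m + 2)).submatrix Fin.castSucc Fin.castSucc = Xmat d C (m + 1) :=
      submatrix_Xmat d C (m + 1)
    rw [hA, this]
    rw [detX]
    ring
  -- the minor matrix for column a
  have hfa : f a = - detX d C m := by
    have hcol : ∀ i : Fin (m + 1),
        (A.submatrix b.succAbove a.succAbove) i (Fin.last m) = if (i : ℕ) = m then -1 else 0 := by
      intro i
      have hi := i.isLt
      have hsa : ((a.succAbove (Fin.last m) : Fin (m + 2)) : ℕ) = m + 1 := by
        rw [haa, Fin.succAbove]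
        rw [if_neg (by simp [Fin.lt_def])]
        simp
      have hsb : b.succAbove = Fin.castSucc := Fin.succAbove_last
      rw [Matrix.submatrix_apply, hsb, hA, Xmat_eq_XF]
      unfold XF
      rw [Fin.coe_castSucc, hsa]
      rw [dif_neg (by omega)]
      split_ifs <;> omega
    have hminor : (A.submatrix b.succAbove a.succAbove).submatrix
        (Fin.last m).succAbove (Fin.last m).succAbove = Xmat d C m := by
      ext p q
      have hq := q.isLt
      rw [Matrix.submatrix_apply, Matrix.submatrix_apply]
      have h1 : b.succAbove = Fin.castSucc := Fin.succAbove_last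
      have h2 : (Fin.last m).succAbove = Fin.castSucc := Fin.succAbove_last
      rw [h1, h2]
      have hval : ((a.succAbove (Fin.castSucc q) : Fin (m + 2)) : ℕ) = (q : ℕ) := by
        rw [haa, Fin.succAbove]
        rw [if_pos (by simp [Fin.lt_def])]
        simp
      exact Xmat_coe d C _ _ p q (by simp) hval
    have hdetB : (A.submatrix b.succAbove a.succAbove).det = - detX d C m := by
      rw [Matrix.det_succ_column (A.submatrix b.succAbove a.succAbove) (Fin.last m)]
      rw [Fintype.sum_eq_single (Fin.last m) (by
        intro c hc
        have : (c : ℕ) ≠ m := fun h => hc (by rw [Fin.ext_iff, h]; rfl)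
        rw [hcol, if_neg this]
        ring)]
      rw [hcol, hminor]
      simp only [Fin.val_last, if_pos rfl, detX]
      rw [Even.neg_one_pow ⟨m, rfl⟩]
      simp [detX]
    rw [hf]
    simp only
    rw [hrow, hva, if_neg (by omega), if_pos rfl, hdetB]
    rw [hvb, show m + 1 + m = 2 * m + 1 from by omega, Odd.neg_one_pow ⟨m, rfl⟩]
    ring
  have : A.det = detX d C (m + 2) := rfl
  rw [← this, hsum, hfa, hfb]
  ring

lemma detX_sub (d : ℕ) (C : Matrix (Fin d) (Fin d) ℤ) (hd : 1 ≤ d) (k : ℕ) :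
    detX d C (d + k) - detX d C (d + k - 1) = Δdiff d C := by
  obtain ⟨e, rfl⟩ : ∃ e, d = e + 1 := ⟨d - 1, by omega⟩
  induction k with
  | zero => simp [Δdiff]
  | succ k ih =>
      have h := detX_rec (e + 1) C (e + k) (by omega)
      rw [show e + 1 + (k + 1) = e + k + 2 from by omega,
        show e + k + 2 - 1 = e + k + 1 from by omega]
      rw [show e + 1 + k = e + k + 1 from by omega,
        show e + k + 1 - 1 = e + k from by omega] at ih
      linarith

lemma detX_eq (d : ℕ) (C : Matrix (Fin d) (Fin d) ℤ) (hd : 1 ≤ d) (k : ℕ) :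
    detX d C (d + k) = detX d C d + (k : ℤ) * Δdiff d C := by
  induction k with
  | zero => simp
  | succ k ih =>
      have h := detX_sub d C hd (k + 1)
      rw [show d + (k + 1) - 1 = d + k from by omega] at h
      push_cast
      rw [show d + (k + 1) = d + k + 1 from by omega] at *
      linarith

lemma coprime_delta (d : ℕ) (C : Matrix (Fin d) (Fin d) ℤ) (hd : 1 ≤ d)
    (hX : Extensible d C) (k : ℕ) : IsCoprime (Δdiff d C) (detX d C (d + k)) := by
  rw [detX_eq d C hd k, mul_comm]
  exact hX.2.2.add_mul_left_right k

lemma coprime_consec (d : ℕ) (C : Matrix (Fin d) (Fin d) ℤ) (hd : 1 ≤ d)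
    (hX : Extensible d C) (n : ℕ) (hn : d ≤ n) :
    IsCoprime (detX d C (n - 1)) (detX d C n) := by
  obtain ⟨k, rfl⟩ : ∃ k, n = d + k := ⟨n - d, by omega⟩
  obtain ⟨u, v, huv⟩ := coprime_delta d C hd hX k
  have h2 := detX_sub d C hd k
  exact ⟨-u, u + v, by linear_combination huv + u * h2⟩

lemma mulVec_mem_of_cols (n : ℕ) (A : Matrix (Fin n) (Fin n) ℤ) (p : Submodule ℤ (Fin n → ℤ))
    (h : ∀ j, (fun i => A i j) ∈ p) (v : Fin n → ℤ) : A.mulVec v ∈ p := by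
  have hv : A.mulVec v = ∑ j, v j • fun i => A i j := by
    ext r
    simp [Matrix.mulVec, dotProduct, Finset.sum_apply, mul_comm]
  rw [hv]
  exact Submodule.sum_mem _ fun j _ => p.smul_mem _ (h j)

lemma det_smul_single_mem (n : ℕ) (A : Matrix (Fin n) (Fin n) ℤ) (p : Submodule ℤ (Fin n → ℤ))
    (h : ∀ j, (fun i => A i j) ∈ p) (i : Fin n) :
    A.det • (Pi.single i 1 : Fin n → ℤ) ∈ p := by
  have key : A.det • (Pi.single i 1 : Fin n → ℤ) = A.mulVec fun k => A.adjugate k i := by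
    ext r
    have h2 := congrArg (fun B : Matrix (Fin n) (Fin n) ℤ => B r i) (Matrix.mul_adjugate A)
    simp only [Matrix.mul_apply, Matrix.smul_apply, Matrix.one_apply, smul_eq_mul] at h2
    simp only [Pi.smul_apply, Pi.single_apply, smul_eq_mul, Matrix.mulVec, dotProduct]
    rw [h2]
  rw [key]
  exact mulVec_mem_of_cols n A p h _

lemma card_quot_span_cols (n : ℕ) (A : Matrix (Fin n) (Fin n) ℤ) (hA : A.det ≠ 0) :
    Nat.card ((Fin n → ℤ) ⧸ Submodule.span ℤ (Set.range fun j => (fun i => A i j))) =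
      A.det.natAbs := by
  classical
  set Q : Submodule ℤ (Fin n → ℤ) := Submodule.span ℤ (Set.range fun j => (fun i => A i j))
    with hQ
  have hsp : Q = LinearMap.range A.mulVecLin := by
    rw [Matrix.range_mulVecLin]
    rfl
  have hinj : Function.Injective A.mulVecLin := by
    intro x y hxy
    have h1 : ∀ z : Fin n → ℤ, A.adjugate.mulVec (A.mulVec z) = A.det • z := by
      intro z
      rw [Matrix.mulVec_mulVec, Matrix.adjugate_mul, Matrix.smul_mulVec,
        Matrix.one_mulVec]
    have h2 : A.det • x = A.det • y := by
      rw [← h1, ← h1]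
      simp only [Matrix.mulVecLin_apply] at hxy
      rw [hxy]
    exact smul_right_injective (Fin n → ℤ) hA h2
  let e : (Fin n → ℤ) ≃ₗ[ℤ] Q :=
    (LinearEquiv.ofInjective A.mulVecLin hinj).trans (LinearEquiv.ofEq _ _ hsp.symm)
  obtain ⟨m, snf⟩ := Submodule.smithNormalForm (Pi.basisFun ℤ (Fin n)) Q
  have hm : n = m := by
    have e2 := snf.bN.indexEquiv ((Pi.basisFun ℤ (Fin n)).map e)
    simpa using (Fintype.card_congr e2).symm
  subst hm
  have hidx : Q.toAddSubgroup.index = ∏ i, (snf.a i).natAbs := by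
    rw [snf.toAddSubgroup_index_eq_pow_mul_prod, Fintype.card_fin, Nat.sub_self, pow_zero,
      one_mul]
    refine Finset.prod_congr rfl fun i _ => ?_
    rw [Ideal.span_singleton_toAddSubgroup_eq_zmultiples, Int.index_zmultiples]
  have hcard : Nat.card ((Fin n → ℤ) ⧸ Q) = Q.toAddSubgroup.index := rfl
  -- determinant computation
  set bstd := Pi.basisFun ℤ (Fin n) with hbstd
  let σ : Equiv.Perm (Fin n) :=
    Equiv.ofBijective snf.f (Finite.injective_iff_bijective.mp snf.f.injective)
  let g2 : (Fin n → ℤ) →ₗ[ℤ] (Fin n → ℤ) :=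
    Q.subtype ∘ₗ (snf.bN.equivFun.symm : (Fin n → ℤ) ≃ₗ[ℤ] Q).toLinearMap
  let φ : (Fin n → ℤ) ≃ₗ[ℤ] (Fin n → ℤ) := e.trans snf.bN.equivFun
  have hg : A.mulVecLin = g2 ∘ₗ (φ : (Fin n → ℤ) ≃ₗ[ℤ] (Fin n → ℤ)).toLinearMap := by
    apply LinearMap.ext
    intro x
    simp only [LinearMap.coe_comp, Function.comp_apply, LinearEquiv.coe_toLinearMap,
      LinearEquiv.trans_apply, g2, φ, LinearEquiv.symm_apply_apply, Submodule.coe_subtype]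
    show A.mulVecLin x = ((LinearEquiv.ofEq _ _ hsp.symm) ((LinearEquiv.ofInjective _ hinj) x)
      : Fin n → ℤ)
    rw [LinearEquiv.coe_ofEq_apply, LinearEquiv.ofInjective_apply]
  have hmat : LinearMap.toMatrix bstd bstd g2 =
      (bstd.toMatrix (fun i => (snf.bM i : Fin n → ℤ))).submatrix id σ * Matrix.diagonal snf.a := by
    ext p i
    rw [LinearMap.toMatrix_apply, Matrix.mul_apply]
    have hrow : ∀ k, ((bstd.toMatrix fun i => snf.bM i).submatrix id σ) p k *
        Matrix.diagonal snf.a k i = if k = i then snf.bM (σ i) p * snf.a i else 0 := by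
      intro k
      by_cases hk : k = i
      · subst hk; simp [Matrix.diagonal_apply_eq, Module.Basis.toMatrix_apply, Pi.basisFun_repr, bstd]
      · simp [Matrix.diagonal_apply_ne _ hk, hk]
    rw [Finset.sum_congr rfl fun k _ => hrow k, Finset.sum_ite_eq' Finset.univ i
      (fun k => snf.bM (σ i) p * snf.a i)]
    simp only [Finset.mem_univ, if_pos]
    have hb : g2 (bstd i) = (snf.bN i : Fin n → ℤ) := by
      simp only [g2, LinearMap.coe_comp, Function.comp_apply, LinearEquiv.coe_toLinearMap,
        Submodule.coe_subtype]
      congr 1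
      rw [hbstd, Pi.basisFun_apply]
      exact Basis.equivFun_symm_single snf.bN i
    rw [hb, snf.snf i]
    have : σ i = snf.f i := rfl
    rw [this]
    simp [Pi.basisFun_repr, bstd, mul_comm]
  have hdet1 : LinearMap.det A.mulVecLin = A.det := by
    rw [← Matrix.toLin'_apply', LinearMap.det_toLin']
  have hdetg2 : (LinearMap.det g2).natAbs = ∏ i, (snf.a i).natAbs := by
    rw [← LinearMap.det_toMatrix bstd, hmat, Matrix.det_mul, Matrix.det_diagonal,
      Int.natAbs_mul, Matrix.det_permute', Int.natAbs_mul]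
    have h2 : ((bstd.toMatrix fun i => (snf.bM i : Fin n → ℤ)).det).natAbs = 1 := by
      have hinv := bstd.invertibleToMatrix snf.bM
      exact Int.isUnit_iff_natAbs_eq.mp (Matrix.isUnit_det_of_invertible _)
    simp only [Int.cast_id]
    rw [Int.units_natAbs, h2, one_mul, one_mul]
    exact map_prod Int.natAbsHom snf.a Finset.univ
  have hφ : (LinearMap.det (φ : (Fin n → ℤ) ≃ₗ[ℤ] (Fin n → ℤ)).toLinearMap).natAbs = 1 :=
    Int.isUnit_iff_natAbs_eq.mp (LinearEquiv.isUnit_det' φ)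
  have hfinal : A.det.natAbs = ∏ i, (snf.a i).natAbs := by
    rw [← hdet1, hg, LinearMap.det_comp, Int.natAbs_mul, hφ, mul_one, hdetg2]
  rw [hcard, hidx, hfinal]

lemma det_updateColumn_last (d : ℕ) (C : Matrix (Fin d) (Fin d) ℤ) (n : ℕ) (hd : d ≤ n)
    (hn1 : 0 < n) :
    ((Xmat d C n).updateCol (lastFin n hn1) (fw n (lastFin n hn1))).det = detX d C (n - 1) := by
  classical
  obtain ⟨m, rfl⟩ : ∃ m, n = m + 1 := ⟨n - 1, by omega⟩
  have hlast : lastFin (m + 1) hn1 = Fin.last m := rfl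
  set N := (Xmat d C (m + 1)).updateCol (lastFin (m + 1) hn1) (fw (m + 1) (lastFin (m + 1) hn1))
    with hN
  rw [Matrix.det_succ_column N (Fin.last m), Fintype.sum_eq_single (Fin.last m) ?_]
  · have h1 : N (Fin.last m) (Fin.last m) = 1 := by
      rw [hN, hlast]
      simp [Matrix.updateCol_apply, fw]
    have h2 : N.submatrix (Fin.last m).succAbove (Fin.last m).succAbove = Xmat d C m := by
      ext p q
      rw [Matrix.submatrix_apply, Fin.succAbove_last, hN, hlast]
      rw [Matrix.updateCol_apply, if_neg (Fin.castSucc_lt_last q).ne]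
      exact Xmat_coe d C _ _ p q (by simp) (by simp)
    rw [h1, h2]
    simp only [Fin.val_last]
    rw [Even.neg_one_pow ⟨m, rfl⟩]
    simp [detX]
  · intro i hi
    have h0 : N i (Fin.last m) = 0 := by
      rw [hN, hlast]
      rw [Matrix.updateCol_apply, if_pos rfl]
      have : i ≠ Fin.last m := hi
      simp [fw, Pi.single_apply, this]
    rw [h0]
    ring

lemma Qlat_sup_span_eq_top (d : ℕ) (hd : 1 ≤ d) (C : Matrix (Fin d) (Fin d) ℤ)
    (hX : Extensible d C) (n : ℕ) (hn : d ≤ n) (hn1 : 0 < n) :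
    Qlat d C n ⊔ Submodule.span ℤ {fw n (lastFin n hn1)} = ⊤ := by
  classical
  set M := Xmat d C n with hM
  set g : Fin n → ℤ := fw n (lastFin n hn1) with hg
  set L : Submodule ℤ (Fin n → ℤ) := Qlat d C n ⊔ Submodule.span ℤ {g} with hL
  have hcolM : ∀ j, (fun i => M i j) ∈ Qlat d C n := fun j =>
    Submodule.subset_span ⟨j, rfl⟩
  have hcolM' : ∀ j, (fun i => M i j) ∈ L := fun j => Submodule.mem_sup_left (hcolM j)
  set N : Matrix (Fin n) (Fin n) ℤ := M.updateCol (lastFin n hn1) g with hN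
  have hcolN : ∀ j, (fun i => N i j) ∈ L := by
    intro j
    by_cases hj : j = lastFin n hn1
    · subst hj
      have hc : (fun i => N i (lastFin n hn1)) = g := by
        ext i
        rw [hN, Matrix.updateCol_apply, if_pos rfl]
      rw [hc]
      exact Submodule.mem_sup_right (Submodule.mem_span_singleton_self g)
    · have hc : (fun i => N i j) = fun i => M i j := by
        ext i
        rw [hN, Matrix.updateCol_apply, if_neg hj]
      rw [hc]
      exact hcolM' j
  have hdetN : N.det = detX d C (n - 1) := det_updateColumn_last d C n hn hn1
  obtain ⟨u, v, huv⟩ := coprime_consec d C hd hX n hn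
  rw [eq_top_iff]
  rintro x -
  have hx : x = ∑ i, x i • (Pi.single i 1 : Fin n → ℤ) := by
    ext r
    rw [Finset.sum_apply]
    simp [Pi.single_apply]
  rw [hx]
  refine Submodule.sum_mem _ fun i _ => Submodule.smul_mem _ _ ?_
  have hsingle : (Pi.single i 1 : Fin n → ℤ) =
      u • (N.det • (Pi.single i 1 : Fin n → ℤ)) +
      v • (M.det • (Pi.single i 1 : Fin n → ℤ)) := by
    rw [smul_smul, smul_smul, ← add_smul]
    have hMdet : M.det = detX d C n := rfl
    rw [hdetN, hMdet, huv, one_smul]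
  rw [hsingle]
  exact Submodule.add_mem _
    (Submodule.smul_mem _ _ (det_smul_single_mem n N L hcolN i))
    (Submodule.smul_mem _ _ (Submodule.mem_sup_left (det_smul_single_mem n M (Qlat d C n) hcolM i)))

/-- For an extensible marked Dynkin diagram `X` and `n ≥ d` with
`det(C(X_n)) ≠ 0`, the group `P(X_n)/Q(X_n)` is cyclic of order
`|det(C(X_n))|`, generated by the class of the fundamental weight of the last
node of the tail.  (Weights are written in fundamental-weight coordinates, so
`P(X_n) = ℤⁿ`, the `i`-th fundamental weight is `fw n i` and the root lattice
`Q(X_n)` is spanned by the columns of the Cartan matrix.) -/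
theorem tensor_stab_quotient_cyclic (d : ℕ) (hd : 1 ≤ d)
    (C : Matrix (Fin d) (Fin d) ℤ) (hX : Extensible d C)
    (n : ℕ) (hn : d ≤ n) (hdet : detX d C n ≠ 0) :
    Nat.card ((Fin n → ℤ) ⧸ Qlat d C n) = (detX d C n).natAbs ∧
    ∀ v : (Fin n → ℤ) ⧸ Qlat d C n, ∃ k : ℤ,
      v = k • (Submodule.Quotient.mk (fw n (lastFin n (by omega))) :
        (Fin n → ℤ) ⧸ Qlat d C n) := by
  classical
  constructor
  · exact card_quot_span_cols n (Xmat d C n) hdet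
  · intro v
    obtain ⟨x, rfl⟩ := Submodule.Quotient.mk_surjective _ v
    have hx : x ∈ Qlat d C n ⊔ Submodule.span ℤ {fw n (lastFin n (by omega))} := by
      rw [Qlat_sup_span_eq_top d hd C hX n hn (by omega)]
      trivial
    rw [Submodule.mem_sup] at hx
    obtain ⟨y, hy, z, hz, rfl⟩ := hx
    rw [Submodule.mem_span_singleton] at hz
    obtain ⟨k, rfl⟩ := hz
    refine ⟨k, ?_⟩
    rw [Submodule.Quotient.mk_add, (Submodule.Quotient.mk_eq_zero _).mpr hy, zero_add,
      Submodule.Quotient.mk_smul]
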